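/- Let φ, ψ, θ : I → ℝ be differentiable functions and let c(s) = Φ(φ(s), ψ(s), θ(s)) be the corresponding curve on H. Then the coordinates of the velocity vector in the frame {T, X, Y} are α(s) = −(1/2)(φ̇ cosh 2θ + ψ̇), β(s) = (1/2)(φ̇ sin ψ sinh 2θ + 2θ̇ cos ψ), and γ(s) = (1/2)(φ̇ cos ψ sinh 2θ − 2θ̇ sin ψ). In particular, c is horizontal with respect to span{T,X} if and only if φ̇ cos ψ sinh 2θ − 2θ̇ sin ψ = 0 for all s. -/
import Mathlib


open Real Set

noncomputable section

/-- Pseudo-Euclidean inner product of signature (2,2) on ℝ⁴. -/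
def ip (x y : Fin 4 → ℝ) : ℝ :=
  -(x 0 * y 0) - x 1 * y 1 + x 2 * y 2 + x 3 * y 3

/-- Anti-de Sitter space H = {x : ⟨x,x⟩ = -1}. -/
def AdS : Set (Fin 4 → ℝ) := {x | ip x x = -1}

/-- The vector field T(x) = (−x₂, x₁, x₄, −x₃). -/
def Tf (x : Fin 4 → ℝ) : Fin 4 → ℝ := ![-(x 1), x 0, x 3, -(x 2)]

/-- The vector field X(x) = (x₃, x₄, x₁, x₂). -/
def Xf (x : Fin 4 → ℝ) : Fin 4 → ℝ := ![x 2, x 3, x 0, x 1]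

/-- The vector field Y(x) = (x₄, −x₃, −x₂, x₁). -/
def Yf (x : Fin 4 → ℝ) : Fin 4 → ℝ := ![x 3, -(x 2), -(x 1), x 0]

/-- The normal vector field N(x) = x. -/
def Nf (x : Fin 4 → ℝ) : Fin 4 → ℝ := x

/-- α(s) = ⟨ċ(s), T(c(s))⟩. -/
def alphaC (c : ℝ → Fin 4 → ℝ) (s : ℝ) : ℝ := ip (deriv c s) (Tf (c s))

/-- β(s) = ⟨ċ(s), X(c(s))⟩. -/
def betaC (c : ℝ → Fin 4 → ℝ) (s : ℝ) : ℝ := ip (deriv c s) (Xf (c s))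

/-- γ(s) = ⟨ċ(s), Y(c(s))⟩. -/
def gammaC (c : ℝ → Fin 4 → ℝ) (s : ℝ) : ℝ := ip (deriv c s) (Yf (c s))

/-- Parametrization Φ(φ,ψ,θ) of AdS, with a = (φ+ψ)/2, b = (φ−ψ)/2. -/
def Phi (φ ψ θ : ℝ) : Fin 4 → ℝ :=
  ![Real.cos ((φ + ψ)/2) * Real.cosh θ,
    Real.sin ((φ + ψ)/2) * Real.cosh θ,
    Real.cos ((φ - ψ)/2) * Real.sinh θ,
    Real.sin ((φ - ψ)/2) * Real.sinh θ]

lemma curve_deriv' (φ ψ θ : ℝ → ℝ) (s : ℝ)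
    (hφ : DifferentiableAt ℝ φ s) (hψ : DifferentiableAt ℝ ψ s)
    (hθ : DifferentiableAt ℝ θ s) :
    HasDerivAt (fun t => (![Real.cos ((φ t + ψ t)/2) * Real.cosh (θ t),
      Real.sin ((φ t + ψ t)/2) * Real.cosh (θ t),
      Real.cos ((φ t - ψ t)/2) * Real.sinh (θ t),
      Real.sin ((φ t - ψ t)/2) * Real.sinh (θ t)] : Fin 4 → ℝ))
      (![-Real.sin ((φ s + ψ s)/2) * ((deriv φ s + deriv ψ s)/2) * Real.cosh (θ s)
          + Real.cos ((φ s + ψ s)/2) * (Real.sinh (θ s) * deriv θ s),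
        Real.cos ((φ s + ψ s)/2) * ((deriv φ s + deriv ψ s)/2) * Real.cosh (θ s)
          + Real.sin ((φ s + ψ s)/2) * (Real.sinh (θ s) * deriv θ s),
        -Real.sin ((φ s - ψ s)/2) * ((deriv φ s - deriv ψ s)/2) * Real.sinh (θ s)
          + Real.cos ((φ s - ψ s)/2) * (Real.cosh (θ s) * deriv θ s),
        Real.cos ((φ s - ψ s)/2) * ((deriv φ s - deriv ψ s)/2) * Real.sinh (θ s)
          + Real.sin ((φ s - ψ s)/2) * (Real.cosh (θ s) * deriv θ s)]) s := by
  have ha : HasDerivAt (fun t => (φ t + ψ t)/2) ((deriv φ s + deriv ψ s)/2) s :=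
    (hφ.hasDerivAt.add hψ.hasDerivAt).div_const 2
  have hb : HasDerivAt (fun t => (φ t - ψ t)/2) ((deriv φ s - deriv ψ s)/2) s :=
    (hφ.hasDerivAt.sub hψ.hasDerivAt).div_const 2
  have hth := hθ.hasDerivAt
  rw [hasDerivAt_pi]
  intro i
  fin_cases i <;> simp <;>
  [ exact (ha.cos.mul hth.cosh).congr_deriv (by ring);
    exact (ha.sin.mul hth.cosh).congr_deriv (by ring);
    exact (hb.cos.mul hth.sinh).congr_deriv (by ring);
    exact (hb.sin.mul hth.sinh).congr_deriv (by ring) ]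

/-- frame coordinates of the velocity of a curve s ↦ Φ(φ(s),ψ(s),θ(s)),
and the horizontality criterion φ̇ cos ψ sinh 2θ − 2θ̇ sin ψ = 0 for span{T,X}. -/
theorem frame_coordinates_parametrization (φ ψ θ : ℝ → ℝ)
    (hφ : ∀ s, DifferentiableAt ℝ φ s)
    (hψ : ∀ s, DifferentiableAt ℝ ψ s)
    (hθ : ∀ s, DifferentiableAt ℝ θ s) :
    (∀ s, alphaC (fun t => Phi (φ t) (ψ t) (θ t)) s
        = -(1/2) * (deriv φ s * Real.cosh (2 * θ s) + deriv ψ s)) ∧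
    (∀ s, betaC (fun t => Phi (φ t) (ψ t) (θ t)) s
        = (1/2) * (deriv φ s * Real.sin (ψ s) * Real.sinh (2 * θ s)
            + 2 * deriv θ s * Real.cos (ψ s))) ∧
    (∀ s, gammaC (fun t => Phi (φ t) (ψ t) (θ t)) s
        = (1/2) * (deriv φ s * Real.cos (ψ s) * Real.sinh (2 * θ s)
            - 2 * deriv θ s * Real.sin (ψ s))) ∧
    ((∀ s, gammaC (fun t => Phi (φ t) (ψ t) (θ t)) s = 0) ↔
      (∀ s, deriv φ s * Real.cos (ψ s) * Real.sinh (2 * θ s)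
        - 2 * deriv θ s * Real.sin (ψ s) = 0)) := by
  have hd : ∀ s, deriv (fun t => Phi (φ t) (ψ t) (θ t)) s
      = ![-Real.sin ((φ s + ψ s)/2) * ((deriv φ s + deriv ψ s)/2) * Real.cosh (θ s)
          + Real.cos ((φ s + ψ s)/2) * (Real.sinh (θ s) * deriv θ s),
        Real.cos ((φ s + ψ s)/2) * ((deriv φ s + deriv ψ s)/2) * Real.cosh (θ s)
          + Real.sin ((φ s + ψ s)/2) * (Real.sinh (θ s) * deriv θ s),
        -Real.sin ((φ s - ψ s)/2) * ((deriv φ s - deriv ψ s)/2) * Real.sinh (θ s)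
          + Real.cos ((φ s - ψ s)/2) * (Real.cosh (θ s) * deriv θ s),
        Real.cos ((φ s - ψ s)/2) * ((deriv φ s - deriv ψ s)/2) * Real.sinh (θ s)
          + Real.sin ((φ s - ψ s)/2) * (Real.cosh (θ s) * deriv θ s)] := by
    intro s
    exact (curve_deriv' φ ψ θ s (hφ s) (hψ s) (hθ s)).deriv
  have hcos : ∀ s, Real.cos (ψ s)
      = Real.cos ((φ s + ψ s)/2) * Real.cos ((φ s - ψ s)/2)
        + Real.sin ((φ s + ψ s)/2) * Real.sin ((φ s - ψ s)/2) := by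
    intro s
    have h := Real.cos_sub ((φ s + ψ s)/2) ((φ s - ψ s)/2)
    rw [show (φ s + ψ s)/2 - (φ s - ψ s)/2 = ψ s by ring] at h
    exact h
  have hsin : ∀ s, Real.sin (ψ s)
      = Real.sin ((φ s + ψ s)/2) * Real.cos ((φ s - ψ s)/2)
        - Real.cos ((φ s + ψ s)/2) * Real.sin ((φ s - ψ s)/2) := by
    intro s
    have h := Real.sin_sub ((φ s + ψ s)/2) ((φ s - ψ s)/2)
    rw [show (φ s + ψ s)/2 - (φ s - ψ s)/2 = ψ s by ring] at h
    exact h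
  have h1 : ∀ x : ℝ, Real.sin x ^ 2 + Real.cos x ^ 2 = 1 := fun x => Real.sin_sq_add_cos_sq x
  have h3 : ∀ x : ℝ, Real.cosh x ^ 2 - Real.sinh x ^ 2 = 1 := fun x => Real.cosh_sq_sub_sinh_sq x
  have hga : ∀ s, gammaC (fun t => Phi (φ t) (ψ t) (θ t)) s
      = (1/2) * (deriv φ s * Real.cos (ψ s) * Real.sinh (2 * θ s)
          - 2 * deriv θ s * Real.sin (ψ s)) := by
    intro s
    simp only [gammaC, ip]
    rw [hd s]
    simp only [Yf, Phi, Matrix.cons_val_zero, Matrix.cons_val_one,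
      Matrix.head_cons, Matrix.cons_val_two, Matrix.tail_cons, Matrix.cons_val_three]
    rw [hcos s, hsin s, Real.sinh_two_mul]
    linear_combination (-(deriv θ s)*(Real.sin ((φ s + ψ s)/2)*Real.cos ((φ s - ψ s)/2)
      - Real.cos ((φ s + ψ s)/2)*Real.sin ((φ s - ψ s)/2)))*(h3 (θ s))
  refine ⟨?_, ?_, hga, ?_⟩
  · intro s
    simp only [alphaC, ip]
    rw [hd s]
    simp only [Tf, Phi, Matrix.cons_val_zero, Matrix.cons_val_one,
      Matrix.head_cons, Matrix.cons_val_two, Matrix.tail_cons, Matrix.cons_val_three]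
    rw [Real.cosh_two_mul]
    linear_combination (-(deriv φ s + deriv ψ s)/2*Real.cosh (θ s)^2)*(h1 ((φ s + ψ s)/2))
      + (-(deriv φ s - deriv ψ s)/2*Real.sinh (θ s)^2)*(h1 ((φ s - ψ s)/2))
      + (-(deriv ψ s)/2)*(h3 (θ s))
  · intro s
    simp only [betaC, ip]
    rw [hd s]
    simp only [Xf, Phi, Matrix.cons_val_zero, Matrix.cons_val_one,
      Matrix.head_cons, Matrix.cons_val_two, Matrix.tail_cons, Matrix.cons_val_three]
    rw [hcos s, hsin s, Real.sinh_two_mul]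
    linear_combination ((deriv θ s)*(Real.cos ((φ s + ψ s)/2)*Real.cos ((φ s - ψ s)/2)
      + Real.sin ((φ s + ψ s)/2)*Real.sin ((φ s - ψ s)/2)))*(h3 (θ s))
  · constructor
    · intro h s
      have hh := h s
      rw [hga s] at hh
      linarith
    · intro h s
      rw [hga s, h s]
      ring
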